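/- Let n ≥ 1 and let K_n denote the complete graph on n vertices. Then for every natural number k, twice the number of edges of the k-coloring graph C_k(K_n) equals n · k(k−1)(k−2)⋯(k−n), i.e., n times the product ∏_{i=0}^{n} (k−i), as integers. -/

import Mathlib

open SimpleGraph Finset

/-- A proper coloring of `G` with colors `Fin k` (value `i` represents color `i+1`). -/
def IsProperColoring {V : Type*} (G : SimpleGraph V) {k : ℕ} (c : V → Fin k) : Prop :=
  ∀ ⦃u v : V⦄, G.Adj u v → c u ≠ c v

/-- The `k`-coloring graph of `G`: vertices are proper `k`-colorings of `G`, two colorings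
adjacent iff they differ at exactly one vertex of `G`. -/
def ColGraph {V : Type*} (G : SimpleGraph V) (k : ℕ) :
    SimpleGraph {c : V → Fin k // IsProperColoring G c} where
  Adj c d := ∃! v, c.1 v ≠ d.1 v
  symm := by
    constructor
    rintro c d ⟨v, hv, hu⟩
    exact ⟨v, hv.symm, fun w hw => hu w hw.symm⟩
  loopless := by
    constructor
    rintro c ⟨v, hv, -⟩
    exact hv rfl

/-- The number of edges of the `k`-coloring graph of `G`. -/
noncomputable def numEdges {V : Type*} (G : SimpleGraph V) (k : ℕ) : ℕ :=
  Nat.card (ColGraph G k).edgeSet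

/-- The number of proper `k`-colorings of `G` (the chromatic polynomial evaluated at `k`). -/
noncomputable def numColorings {V : Type*} (G : SimpleGraph V) (k : ℕ) : ℕ :=
  Nat.card {c : V → Fin k // IsProperColoring G c}

/-- `π_G^{(H)}(k)`: the number of vertex subsets of the `k`-coloring graph of `G`
inducing a subgraph isomorphic to `H`. -/
noncomputable def inducedCopies {V W : Type*} (G : SimpleGraph V) (H : SimpleGraph W)
    (k : ℕ) : ℕ :=
  Nat.card {S : Set {c : V → Fin k // IsProperColoring G c} //
    Nonempty ((ColGraph G k).induce S ≃g H)}

/-- The number of proper `k`-colorings of `G − v` in which every neighbor of `v`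
avoids the first `t` colors (colors `1, …, t`, i.e. `Fin k` values `< t`). -/
noncomputable def restrainedCount {V : Type*} (G : SimpleGraph V) (v : V) (t k : ℕ) : ℕ :=
  Nat.card {c : ↥{w : V | w ≠ v} → Fin k //
    IsProperColoring (G.induce {w : V | w ≠ v}) c ∧
    ∀ w : ↥{w : V | w ≠ v}, G.Adj v ↑w → t ≤ (c w).val}

/-- The `s`-dimensional hypercube graph: vertices are functions `Fin s → Bool`,
adjacent iff they differ in exactly one coordinate. -/
def hypercube (s : ℕ) : SimpleGraph (Fin s → Bool) where
  Adj x y := ∃! i, x i ≠ y i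
  symm := by
    constructor
    rintro x y ⟨i, hi, hu⟩
    exact ⟨i, hi.symm, fun j hj => hu j hj.symm⟩
  loopless := by
    constructor
    rintro x ⟨i, hi, -⟩
    exact hi rfl

section Aux
variable {n k : ℕ}

lemma proper_top_iff (c : Fin n → Fin k) :
    IsProperColoring (⊤ : SimpleGraph (Fin n)) c ↔ Function.Injective c := by
  constructor
  · intro h u v huv
    by_contra hne
    exact h (by simpa [SimpleGraph.top_adj] using hne) huv
  · intro h u v huv hc
    exact huv.ne (h hc)

abbrev Col (n k : ℕ) := {c : Fin n → Fin k // IsProperColoring (⊤ : SimpleGraph (Fin n)) c}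

lemma update_inj {c : Fin n → Fin k} (hinj : Function.Injective c) {a : Fin k}
    (ha : ∀ w, a ≠ c w) (v : Fin n) : Function.Injective (Function.update c v a) := by
  intro u w huw
  by_cases hu : u = v <;> by_cases hw : w = v
  · rw [hu, hw]
  · rw [hu, Function.update_self, Function.update_of_ne hw] at huw
    exact absurd huw (ha w)
  · rw [hw, Function.update_self, Function.update_of_ne hu] at huw
    exact absurd huw.symm (ha u)
  · rw [Function.update_of_ne hu, Function.update_of_ne hw] at huw
    exact hinj huw

lemma not_range_forall {c : Fin n → Fin k} {a : Fin k} (ha : a ∉ Set.range c) :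
    ∀ w, a ≠ c w := fun w hw => ha ⟨w, hw.symm⟩

def dartOf : (Σ c : Col n k, Fin n × {a : Fin k // a ∉ Set.range c.1}) →
    (ColGraph (⊤ : SimpleGraph (Fin n)) k).Dart
  | ⟨⟨c, hc⟩, v, a, ha⟩ =>
    ⟨(⟨c, hc⟩, ⟨Function.update c v a,
        (proper_top_iff _).2 (update_inj ((proper_top_iff c).1 hc) (not_range_forall ha) v)⟩),
      by
        refine ⟨v, ?_, ?_⟩
        · show c v ≠ Function.update c v a v
          rw [Function.update_self]
          exact fun h => (not_range_forall ha) v h.symm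
        · intro w hw
          by_contra hwv
          rw [show (⟨Function.update c v a, _⟩ : Col n k).1 w = c w from
            Function.update_of_ne hwv a c] at hw
          exact hw rfl⟩

lemma dartOf_bij : Function.Bijective (dartOf (n := n) (k := k)) := by
  constructor
  · rintro ⟨⟨c, hc⟩, v, a, ha⟩ ⟨⟨c', hc'⟩, v', a', ha'⟩ h
    have hp := congrArg SimpleGraph.Dart.toProd h
    simp only [dartOf, Prod.mk.injEq, Subtype.mk.injEq] at hp
    obtain ⟨rfl, hupd⟩ := hp
    have hav : ∀ w, a ≠ c w := not_range_forall ha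
    have hvv : v = v' := by
      by_contra hne
      have := congrFun hupd v
      rw [Function.update_self, Function.update_of_ne hne] at this
      exact hav v this
    subst hvv
    have haa : a = a' := by
      have := congrFun hupd v
      rwa [Function.update_self, Function.update_self] at this
    subst haa
    rfl
  · rintro ⟨⟨⟨c, hc⟩, ⟨d, hd⟩⟩, hadj⟩
    obtain ⟨v, hv, huniq⟩ := hadj
    dsimp only at hv huniq
    have heq : ∀ w, w ≠ v → c w = d w := by
      intro w hw
      by_contra hne
      exact hw (huniq w hne)
    have hdinj : Function.Injective d := (proper_top_iff d).1 hd
    have hnr : d v ∉ Set.range c := by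
      rintro ⟨w, hw⟩
      rcases eq_or_ne w v with rfl | hwv
      · exact hv hw
      · rw [heq w hwv] at hw
        exact hwv (hdinj hw)
    refine ⟨⟨⟨c, hc⟩, v, d v, hnr⟩, ?_⟩
    have hupd : Function.update c v (d v) = d := by
      funext w
      rcases eq_or_ne w v with rfl | hwv
      · simp
      · rw [Function.update_of_ne hwv]; exact heq w hwv
    apply SimpleGraph.Dart.ext
    show ((⟨c, hc⟩ : Col n k), (⟨Function.update c v (d v), _⟩ : Col n k)) = _
    exact Prod.ext rfl (Subtype.ext hupd)

end Aux

/-- the chromatic pairs polynomial of the complete graph `K_n`. -/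
theorem numEdges_completeGraph (n : ℕ) (hn : 1 ≤ n) (k : ℕ) :
    (2 * numEdges (⊤ : SimpleGraph (Fin n)) k : ℤ) =
      n * ∏ i ∈ Finset.range (n + 1), ((k : ℤ) - i) := by
  classical
  rcases lt_or_ge k n with hkn | hkn
  · -- no colorings at all
    have hempty : IsEmpty (Col n k) := by
      constructor
      rintro ⟨c, hc⟩
      have : Fintype.card (Fin n) ≤ Fintype.card (Fin k) :=
        Fintype.card_le_of_injective c ((proper_top_iff c).1 hc)
      simp only [Fintype.card_fin] at this
      omega
    have h0 : numEdges (⊤ : SimpleGraph (Fin n)) k = 0 := by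
      unfold numEdges
      have : IsEmpty ((ColGraph (⊤ : SimpleGraph (Fin n)) k).edgeSet) := by
        constructor
        rintro ⟨e, he⟩
        induction e with
        | h x y => exact hempty.elim x
      exact Nat.card_of_isEmpty
    rw [h0]
    rw [Finset.prod_eq_zero (Finset.mem_range.2 (by omega : k < n + 1)) (by ring)]
    ring
  · -- k ≥ n
    have key : 2 * numEdges (⊤ : SimpleGraph (Fin n)) k = k.descFactorial n * (n * (k - n)) := by
      have hcard : (2 * numEdges (⊤ : SimpleGraph (Fin n)) k) =
          Nat.card (Σ c : Col n k, Fin n × {a : Fin k // a ∉ Set.range c.1}) := by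
        rw [Nat.card_eq_of_bijective _ dartOf_bij]
        unfold numEdges
        rw [Nat.card_eq_fintype_card, Nat.card_eq_fintype_card, ← SimpleGraph.edgeFinset_card,
          ← SimpleGraph.dart_card_eq_twice_card_edges]
      rw [hcard, Nat.card_eq_fintype_card, Fintype.card_sigma]
      have hsub : ∀ c : Col n k, Fintype.card {a : Fin k // a ∉ Set.range c.1} = k - n := by
        intro c
        have hinj : Function.Injective c.1 := (proper_top_iff c.1).1 c.2
        have : Fintype.card {a : Fin k // a ∉ Set.range c.1}
            = Fintype.card ↥(Set.range c.1)ᶜ := Fintype.card_congr (Equiv.refl _)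
        rw [this, Fintype.card_compl_set, Set.card_range_of_injective hinj,
          Fintype.card_fin, Fintype.card_fin]
      have hterm : ∀ c : Col n k, Fintype.card (Fin n × {a : Fin k // a ∉ Set.range c.1})
          = n * (k - n) := by
        intro c
        rw [Fintype.card_prod, Fintype.card_fin, hsub c]
      simp_rw [hterm]
      rw [Finset.sum_const, smul_eq_mul, Finset.card_univ]
      have hcolcard : Fintype.card (Col n k) = k.descFactorial n := by
        have e : Col n k ≃ (Fin n ↪ Fin k) :=
          { toFun := fun c => ⟨c.1, (proper_top_iff c.1).1 c.2⟩
            invFun := fun f => ⟨f, (proper_top_iff f.1).2 f.injective⟩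
            left_inv := fun c => rfl
            right_inv := fun f => rfl }
        rw [Fintype.card_congr e, Fintype.card_embedding_eq, Fintype.card_fin, Fintype.card_fin]
      rw [hcolcard]
    have hdf : (k.descFactorial n : ℤ) = ∏ i ∈ Finset.range n, ((k : ℤ) - i) := by
      rw [Nat.descFactorial_eq_prod_range, Nat.cast_prod]
      refine Finset.prod_congr rfl fun i hi => ?_
      rw [Finset.mem_range] at hi
      rw [Nat.cast_sub (by omega)]
    calc (2 * numEdges (⊤ : SimpleGraph (Fin n)) k : ℤ)
        = ((2 * numEdges (⊤ : SimpleGraph (Fin n)) k : ℕ) : ℤ) := by push_cast; ring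
      _ = ((k.descFactorial n * (n * (k - n)) : ℕ) : ℤ) := by rw [key]
      _ = (k.descFactorial n : ℤ) * (n * ((k : ℤ) - n)) := by
          push_cast [Nat.cast_sub hkn]; ring
      _ = n * ∏ i ∈ Finset.range (n + 1), ((k : ℤ) - i) := by
          rw [Finset.prod_range_succ, hdf]; ring
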